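/- For any shift-invariant kernel k with normalized Fourier transform p (a probability density on R^d), the identity k(x_i − x_j) = E[2 cos(Ω^T x_i + B) cos(Ω^T x_j + B)] holds, where Ω has density p and B is uniform on [0,2π], independent of Ω. -/

import Mathlib

open MeasureTheory Real
open scoped RealInnerProductSpace

theorem stmt10 {d : ℕ}
    (k : EuclideanSpace ℝ (Fin d) → ℝ)
    (p : EuclideanSpace ℝ (Fin d) → ℝ)
    (hpnn : ∀ ω, 0 ≤ p ω) (hpint : ∫ ω, p ω = 1)
    (hk : ∀ u, (k u : ℂ) = ∫ ω, (p ω : ℂ) * Complex.exp (-(Complex.I * (⟪ω, u⟫ : ℝ))))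
    (xi xj : EuclideanSpace ℝ (Fin d)) :
    k (xi - xj) =
      ∫ v : EuclideanSpace ℝ (Fin d) × ℝ,
          2 * Real.cos (⟪v.1, xi⟫ + v.2) * Real.cos (⟪v.1, xj⟫ + v.2)
        ∂ (((volume : Measure (EuclideanSpace ℝ (Fin d))).withDensity
              fun ω => ENNReal.ofReal (p ω)).prod
            ((ENNReal.ofReal (2*π))⁻¹ • (volume : Measure ℝ).restrict (Set.Icc 0 (2*π)))) := by
  have hpi : Integrable p (volume : Measure (EuclideanSpace ℝ (Fin d))) := by
    by_contra h
    rw [integral_undef h] at hpint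
    norm_num at hpint
  set u := xi - xj with hu
  -- Step B: k u = ∫ p ω * cos ⟪ω, u⟫
  have hcont : Continuous fun ω : EuclideanSpace ℝ (Fin d) => (⟪ω, u⟫ : ℝ) :=
    continuous_id.inner continuous_const
  have hfint : Integrable (fun ω => (p ω : ℂ) * Complex.exp (-(Complex.I * (⟪ω, u⟫ : ℝ))))
      (volume : Measure (EuclideanSpace ℝ (Fin d))) := by
    have hm : AEStronglyMeasurable
        (fun ω => (p ω : ℂ) * Complex.exp (-(Complex.I * (⟪ω, u⟫ : ℝ)))) volume := by
      apply AEStronglyMeasurable.mul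
      · exact (Complex.continuous_ofReal.comp_aestronglyMeasurable hpi.1)
      · exact (Complex.continuous_exp.comp
          ((continuous_const.mul (Complex.continuous_ofReal.comp hcont)).neg)).aestronglyMeasurable
    refine hpi.mono' hm ?_
    filter_upwards with ω
    rw [norm_mul]
    simp [Complex.norm_exp, abs_of_nonneg (hpnn ω)]
  have hBre : ∀ ω : EuclideanSpace ℝ (Fin d),
      ((p ω : ℂ) * Complex.exp (-(Complex.I * (⟪ω, u⟫ : ℝ)))).re
        = p ω * Real.cos ⟪ω, u⟫ := by
    intro ω
    simp [Complex.mul_re, Complex.exp_re, Complex.exp_im, Real.cos_neg]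
  have hku : k u = ∫ ω, p ω * Real.cos ⟪ω, u⟫ := by
    have := hk u
    have h2 : k u = (∫ ω, (p ω : ℂ) * Complex.exp (-(Complex.I * (⟪ω, u⟫ : ℝ)))).re := by
      rw [← this, Complex.ofReal_re]
    have h3 := integral_re hfint
    simp only [RCLike.re_to_complex] at h3
    rw [h2, ← h3]
    exact integral_congr_ae (Filter.Eventually.of_forall hBre)
  -- measures
  set μ := (volume : Measure (EuclideanSpace ℝ (Fin d))).withDensity
      fun ω => ENNReal.ofReal (p ω) with hμ
  set ν := (ENNReal.ofReal (2*π))⁻¹ • (volume : Measure ℝ).restrict (Set.Icc 0 (2*π)) with hν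
  have hπpos : (0:ℝ) < 2*π := by positivity
  have hμfin : IsFiniteMeasure μ := by
    constructor
    rw [hμ, withDensity_apply _ MeasurableSet.univ, Measure.restrict_univ]
    rw [← ofReal_integral_eq_lintegral_ofReal hpi (Filter.Eventually.of_forall hpnn), hpint]
    exact ENNReal.ofReal_lt_top
  have hνfin : IsFiniteMeasure ν := by
    constructor
    rw [hν]
    simp only [Measure.smul_apply, smul_eq_mul]
    refine ENNReal.mul_lt_top ?_ ?_
    · simp [ENNReal.inv_lt_top, ENNReal.ofReal_pos, hπpos, Real.pi_pos]
    · rw [Measure.restrict_apply MeasurableSet.univ, Set.univ_inter, Real.volume_Icc]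
      exact ENNReal.ofReal_lt_top
  haveI := hμfin
  haveI := hνfin
  -- integrability on the product
  have hfc : Continuous fun v : EuclideanSpace ℝ (Fin d) × ℝ =>
      2 * Real.cos (⟪v.1, xi⟫ + v.2) * Real.cos (⟪v.1, xj⟫ + v.2) := by
    have h1 : Continuous fun v : EuclideanSpace ℝ (Fin d) × ℝ => (⟪v.1, xi⟫ : ℝ) + v.2 :=
      ((continuous_fst.inner continuous_const)).add continuous_snd
    have h2 : Continuous fun v : EuclideanSpace ℝ (Fin d) × ℝ => (⟪v.1, xj⟫ : ℝ) + v.2 :=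
      ((continuous_fst.inner continuous_const)).add continuous_snd
    exact (continuous_const.mul (Real.continuous_cos.comp h1)).mul (Real.continuous_cos.comp h2)
  have hint : Integrable (fun v : EuclideanSpace ℝ (Fin d) × ℝ =>
      2 * Real.cos (⟪v.1, xi⟫ + v.2) * Real.cos (⟪v.1, xj⟫ + v.2)) (μ.prod ν) := by
    refine (integrable_const (2:ℝ)).mono' hfc.aestronglyMeasurable ?_
    filter_upwards with v
    rw [Real.norm_eq_abs, abs_mul, abs_mul]
    calc |2| * |Real.cos (⟪v.1, xi⟫ + v.2)| * |Real.cos (⟪v.1, xj⟫ + v.2)|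
        ≤ 2 * 1 * 1 := by
          gcongr
          · simp
          · exact Real.abs_cos_le_one _
          · exact Real.abs_cos_le_one _
      _ = 2 := by norm_num
  rw [integral_prod _ hint]
  -- inner integral
  have hinner : ∀ ω : EuclideanSpace ℝ (Fin d),
      ∫ b, 2 * Real.cos (⟪ω, xi⟫ + b) * Real.cos (⟪ω, xj⟫ + b) ∂ν
        = Real.cos ⟪ω, u⟫ := by
    intro ω
    set a := (⟪ω, xi⟫ : ℝ)
    set c := (⟪ω, xj⟫ : ℝ)
    have key : ∫ b in (0:ℝ)..(2*π), 2 * Real.cos (a + b) * Real.cos (c + b)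
        = 2 * π * Real.cos (a - c) := by
      have hder : ∀ b ∈ Set.uIcc (0:ℝ) (2*π), HasDerivAt
          (fun b => Real.cos (a - c) * b + Real.sin (a + c + 2*b) / 2)
          (2 * Real.cos (a + b) * Real.cos (c + b)) b := by
        intro b _
        have h1 : HasDerivAt (fun b : ℝ => Real.cos (a - c) * b) (Real.cos (a - c)) b := by
          simpa using (hasDerivAt_id b).const_mul (Real.cos (a - c))
        have h2 : HasDerivAt (fun b : ℝ => a + c + 2*b) 2 b := by
          simpa using ((hasDerivAt_id b).const_mul (2:ℝ)).const_add (a + c)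
        have h3 : HasDerivAt (fun b : ℝ => Real.sin (a + c + 2*b) / 2)
            (Real.cos (a + c + 2*b) * 2 / 2) b := ((h2.sin).div_const 2)
        have h4 := h1.add h3
        have h5 : Real.cos (a - c) + Real.cos (a + c + 2*b) * 2 / 2
            = 2 * Real.cos (a + b) * Real.cos (c + b) := by
          have e1 : a + c + 2*b = (a+b) + (c+b) := by ring
          have e2 : a - c = (a+b) - (c+b) := by ring
          rw [e1, e2, Real.cos_add, Real.cos_sub]
          ring
        exact h5 ▸ h4
      have hci : ∀ b ∈ Set.uIcc (0:ℝ) (2*π), ContinuousAt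
          (fun b => 2 * Real.cos (a + b) * Real.cos (c + b)) b := by
        intro b _
        exact ((continuous_const.mul (Real.continuous_cos.comp
          (continuous_const.add continuous_id))).mul (Real.continuous_cos.comp
          (continuous_const.add continuous_id))).continuousAt
      rw [intervalIntegral.integral_eq_sub_of_hasDerivAt hder
        ((ContinuousOn.intervalIntegrable (fun b hb => (hci b hb).continuousWithinAt)))]
      have : Real.sin (a + c + 2*(2*π)) = Real.sin (a + c) := by
        have : a + c + 2*(2*π) = (a + c) + 2*(2*π) := by ring
        rw [this]
        simpa using Real.sin_add_int_mul_two_pi (a+c) 2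
      simp [this]
      ring
    rw [hν, integral_smul_measure]
    have hIcc : ∫ b in Set.Icc (0:ℝ) (2*π), 2 * Real.cos (a + b) * Real.cos (c + b)
        = ∫ b in (0:ℝ)..(2*π), 2 * Real.cos (a + b) * Real.cos (c + b) := by
      rw [intervalIntegral.integral_of_le (le_of_lt hπpos), integral_Icc_eq_integral_Ioc]
    have hsmul : ((ENNReal.ofReal (2*π))⁻¹).toReal = (2*π)⁻¹ := by
      rw [ENNReal.toReal_inv, ENNReal.toReal_ofReal (le_of_lt hπpos)]
    rw [hsmul]
    show (2*π)⁻¹ • (∫ b in Set.Icc (0:ℝ) (2*π), 2 * Real.cos (a + b) * Real.cos (c + b)) = _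
    rw [hIcc, key, smul_eq_mul]
    have hac : a - c = ⟪ω, u⟫ := by rw [hu, inner_sub_right]
    rw [← hac]
    field_simp
  simp only [hinner]
  -- withDensity integral
  have hpm : AEMeasurable (fun ω => (p ω).toNNReal)
      (volume : Measure (EuclideanSpace ℝ (Fin d))) :=
    measurable_real_toNNReal.comp_aemeasurable hpi.1.aemeasurable
  have hwd : ∫ ω, Real.cos ⟪ω, u⟫ ∂μ = ∫ ω, p ω * Real.cos ⟪ω, u⟫ := by
    rw [hμ]
    have : (fun ω => ENNReal.ofReal (p ω)) = fun ω => ((p ω).toNNReal : ENNReal) := rfl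
    rw [this, integral_withDensity_eq_integral_smul₀ hpm]
    congr 1
    ext ω
    rw [NNReal.smul_def, smul_eq_mul, Real.coe_toNNReal _ (hpnn ω)]
  rw [hwd, hku]
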